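/- Let f : K × K → ℝ be n-pseudomonotone of type (I) for all n (i.e., whenever f(x₁,x₂) + f(x₂,x₃) + ⋯ + f(x_{n−2},x_{n−1}) ≤ f(x₁,xₙ), it holds that f(xₙ,x_{n−1}) ≤ 0) and satisfy f(x,x) = 0 for all x ∈ K. Then f is n-pseudomonotone: if f(x₁,x₂) ≥ 0, f(x₂,x₃) ≥ 0, …, f(x_{n−1},xₙ) ≥ 0, then f(xₙ,x₁) ≤ 0. -/

import Mathlib

theorem n_pseudomonotone_of_type_I
    {α : Type*} (K : Set α) (hKne : K.Nonempty) (f : α → α → ℝ)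
    (hdiag : ∀ x ∈ K, f x x = 0)
    (htypeI : ∀ (n : ℕ) (x : ℕ → α), 2 ≤ n → (∀ i, x i ∈ K) →
      (∑ i ∈ Finset.range (n - 2), f (x i) (x (i + 1))) ≤ f (x 0) (x (n - 1)) →
      f (x (n - 1)) (x (n - 2)) ≤ 0) :
    ∀ (n : ℕ) (x : ℕ → α), 2 ≤ n → (∀ i, x i ∈ K) →
      (∀ i, i < n - 1 → 0 ≤ f (x i) (x (i + 1))) →
      f (x (n - 1)) (x 0) ≤ 0 := by
  intro n x hn hK hchain
  induction n, hn using Nat.le_induction with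
  | base =>
    have := htypeI 2 x le_rfl hK (by simpa using hchain 0 (by norm_num))
    simpa using this
  | succ n hn ih =>
    have hIH : f (x (n - 1)) (x 0) ≤ 0 := by
      apply ih
      intro i hi
      exact hchain i (lt_of_lt_of_le hi (by omega))
    set y : ℕ → α := fun i => if i = 0 then x (n - 1) else if i = 1 then x 0 else x n with hy
    have hyK : ∀ i, y i ∈ K := by
      intro i
      simp only [hy]
      split_ifs <;> exact hK _
    have hsum : (∑ i ∈ Finset.range (3 - 2), f (y i) (y (i + 1))) ≤ f (y 0) (y (3 - 1)) := by
      have h1 : n - 1 + 1 = n := by omega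
      have h2 : 0 ≤ f (x (n - 1)) (x n) := by
        have := hchain (n - 1) (by omega)
        rwa [h1] at this
      simp only [hy]
      norm_num
      linarith
    have := htypeI 3 y (by norm_num) hyK hsum
    simp only [hy] at this
    norm_num at this
    simpa using this
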